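/- Let F: [0,1] × ℝ² → ℝ be bounded, continuous and globally Lipschitz in (y,z) uniformly in x ∈ [0,1]. Then for every A, B ∈ ℝ there exists a solution u ∈ C¹([0,1]) of the boundary value problem Lu = F(x,u,u'), u(0) = A, u(1) = B. -/

import Mathlib

open Set MeasureTheory intervalIntegral

/-- A function `u ∈ C¹([0,1])` is a solution of the boundary value problem
`Lu = F(x,u,u')`, `u(0) = A`, `u(1) = B` for the second order operator `L` with
generalized drift (with data `σ` and `Σ = Sig`) if `u(0) = A`, `u(1) = B` and,
denoting by `d` the derivative of `u` on `[0,1]` (which is continuous), there is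
`x₁ ∈ ℝ` such that
`u'(x) = e^{−Σ(x)} (2 ∫_0^x e^{Σ(y)} F(y,u(y),u'(y))/σ²(y) dy + x₁)` on `[0,1]`. -/
def IsBVPSolutionF (σ Sig : ℝ → ℝ) (a b A B : ℝ) (F : ℝ → ℝ → ℝ → ℝ) (u : ℝ → ℝ) :
    Prop :=
  u a = A ∧ u b = B ∧
  ∃ (d : ℝ → ℝ) (x₁ : ℝ),
    ContinuousOn d (Set.Icc a b) ∧
    (∀ x ∈ Set.Icc a b, HasDerivWithinAt u (d x) (Set.Icc a b) x) ∧
    ∀ x ∈ Set.Icc a b,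
      d x = Real.exp (-(Sig x)) *
        (2 * (∫ y in a..x, Real.exp (Sig y) * F y (u y) (d y) / (σ y) ^ 2) + x₁)

open scoped Topology

private lemma bvp_key (E G : ℝ → ℝ) (hE : Continuous E) (hG : Continuous G)
    (Emin Emax Gmax : ℝ) (hEminpos : 0 < Emin)
    (hEmin : ∀ x ∈ Icc (0:ℝ) 1, Emin ≤ E x) (hEmax : ∀ x ∈ Icc (0:ℝ) 1, E x ≤ Emax)
    (hGmax : ∀ x ∈ Icc (0:ℝ) 1, |G x| ≤ Gmax)
    (FF : ℝ → ℝ → ℝ → ℝ)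
    (hFFc : Continuous fun p : ℝ × ℝ × ℝ => FF p.1 p.2.1 p.2.2)
    (M : ℝ) (hM : ∀ x y z, |FF x y z| ≤ M)
    (k : ℝ) (hk : 0 ≤ k)
    (hL : ∀ x y z y' z', |FF x y z - FF x y' z'| ≤ k * (|y - y'| + |z - z'|))
    (A B : ℝ) :
    ∃ (t : ℝ) (d : ℝ → ℝ), Continuous d ∧ (A + ∫ s in (0:ℝ)..1, d s) = B ∧
      ∀ x ∈ Icc (0:ℝ) 1,
        d x = E x * (2 * (∫ y in (0:ℝ)..x, G y * FF y (A + ∫ s in (0:ℝ)..y, d s) (d y)) + t) := by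
  classical
  have h01 : (0:ℝ) ∈ Icc (0:ℝ) 1 := by norm_num
  have hEmaxpos : 0 < Emax := lt_of_lt_of_le hEminpos ((hEmin 0 h01).trans (hEmax 0 h01))
  have hGmax0 : 0 ≤ Gmax := (abs_nonneg _).trans (hGmax 0 h01)
  have hM0 : 0 ≤ M := (abs_nonneg _).trans (hM 0 0 0)
  set I : Set ℝ := Icc (0:ℝ) 1 with hI
  have : Nonempty ↥I := ⟨⟨0, h01⟩⟩
  have : Nonempty C(↥I, ℝ) := ⟨ContinuousMap.const _ 0⟩
  -- extension of a continuous map on I to ℝ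
  let ext : C(↥I, ℝ) → ℝ → ℝ := fun d => Set.IccExtend zero_le_one d
  have hext_cont : ∀ d : C(↥I, ℝ), Continuous (ext d) := fun d =>
    d.continuous.comp continuous_projIcc
  have hext_eq : ∀ (d : C(↥I, ℝ)) (x : ℝ) (hx : x ∈ I), ext d x = d ⟨x, hx⟩ := by
    intro d x hx; exact Set.IccExtend_of_mem _ _ hx
  have hext_dist : ∀ (d d' : C(↥I, ℝ)) (x : ℝ), |ext d x - ext d' x| ≤ dist d d' := by
    intro d d' x
    have := ContinuousMap.dist_apply_le_dist (f := d) (g := d') (Set.projIcc 0 1 zero_le_one x)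
    simpa [ext, Set.IccExtend, Real.dist_eq] using this
  -- the integrand
  let g : C(↥I, ℝ) → ℝ → ℝ := fun d y =>
    G y * FF y (A + ∫ s in (0:ℝ)..y, ext d s) (ext d y)
  have hg_cont : ∀ d, Continuous (g d) := by
    intro d
    have h1 : Continuous fun y => A + ∫ s in (0:ℝ)..y, ext d s :=
      continuous_const.add (intervalIntegral.continuous_primitive
        (fun a b => (hext_cont d).intervalIntegrable a b) 0)
    exact hG.mul (hFFc.comp (continuous_id.prodMk (h1.prodMk (hext_cont d))))
  -- the operator
  let Φ : ℝ → C(↥I, ℝ) → C(↥I, ℝ) := fun t d =>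
    ⟨fun x => E x * (2 * (∫ y in (0:ℝ)..(x:ℝ), g d y) + t), by
      have : Continuous fun x : ℝ => E x * (2 * (∫ y in (0:ℝ)..x, g d y) + t) :=
        hE.mul ((continuous_const.mul (intervalIntegral.continuous_primitive
          (fun a b => (hg_cont d).intervalIntegrable a b) 0)).add continuous_const)
      exact this.comp continuous_subtype_val⟩
  have hΦ_apply : ∀ (t : ℝ) (d : C(↥I, ℝ)) (x : ℝ) (hx : x ∈ I),
      ext (Φ t d) x = E x * (2 * (∫ y in (0:ℝ)..x, g d y) + t) := by
    intro t d x hx; rw [hext_eq _ _ hx]; rfl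
  set κ : ℝ := 4 * Emax * Gmax * k with hκdef
  have hκ0 : 0 ≤ κ := by positivity
  -- the key iterated estimate, one step
  have step : ∀ (t : ℝ) (a b : C(↥I, ℝ)) (c : ℝ), 0 ≤ c → ∀ (n : ℕ),
      (∀ y ∈ I, |ext a y - ext b y| ≤ c * y ^ n / n.factorial) →
      ∀ x ∈ I, |ext (Φ t a) x - ext (Φ t b) x|
        ≤ κ * c * x ^ (n+1) / (n+1).factorial := by
    intro t a b c hc n hab x hx
    obtain ⟨hx0, hx1⟩ := hx
    have hgbound : ∀ y ∈ Icc (0:ℝ) x, |g a y - g b y|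
        ≤ Gmax * k * (2 * c) * y ^ n / n.factorial := by
      intro y hy
      have hyI : y ∈ I := ⟨hy.1, hy.2.trans hx1⟩
      have hy0 : (0:ℝ) ≤ y := hy.1
      have hy1 : y ≤ 1 := hyI.2
      have hfac : (0:ℝ) < n.factorial := by positivity
      -- difference of the first arguments
      have hu : |(A + ∫ s in (0:ℝ)..y, ext a s) - (A + ∫ s in (0:ℝ)..y, ext b s)|
          ≤ c * y ^ n / n.factorial := by
        have h1 : (A + ∫ s in (0:ℝ)..y, ext a s) - (A + ∫ s in (0:ℝ)..y, ext b s)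
            = ∫ s in (0:ℝ)..y, (ext a s - ext b s) := by
          rw [intervalIntegral.integral_sub ((hext_cont a).intervalIntegrable _ _)
            ((hext_cont b).intervalIntegrable _ _)]
          ring
        rw [h1]
        have h2 : |∫ s in (0:ℝ)..y, (ext a s - ext b s)|
            ≤ ∫ s in (0:ℝ)..y, |ext a s - ext b s| :=
          intervalIntegral.abs_integral_le_integral_abs hy0
        have h3 : (∫ s in (0:ℝ)..y, |ext a s - ext b s|)
            ≤ ∫ s in (0:ℝ)..y, c * s ^ n / n.factorial := by
          apply intervalIntegral.integral_mono_on hy0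
          · exact (((hext_cont a).sub (hext_cont b)).abs).intervalIntegrable _ _
          · exact Continuous.intervalIntegrable (by fun_prop) _ _
          · intro s hs; exact hab s ⟨hs.1, hs.2.trans hy1⟩
        have h4 : (∫ s in (0:ℝ)..y, c * s ^ n / n.factorial)
            = (c / n.factorial) * (y ^ (n + 1) / (n + 1)) := by
          have hfe : ∀ s : ℝ, c * s ^ n / n.factorial = (c / n.factorial) * s ^ n := by
            intro s; ring
          simp_rw [hfe]
          rw [intervalIntegral.integral_const_mul, integral_pow]
          push_cast; ring
        have h5 : (c / n.factorial) * (y ^ (n + 1) / (n + 1)) ≤ c * y ^ n / n.factorial := by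
          have hp1 : y ^ (n + 1) ≤ y ^ n := pow_le_pow_of_le_one hy0 hy1 (Nat.le_succ n)
          have hp2 : y ^ (n + 1) / (n + 1) ≤ y ^ n := by
            apply le_trans (div_le_self (by positivity) (by push_cast; linarith [Nat.cast_nonneg (α := ℝ) n])) hp1
          calc (c / n.factorial) * (y ^ (n + 1) / (n + 1))
              ≤ (c / n.factorial) * y ^ n := by
                apply mul_le_mul_of_nonneg_left hp2 (by positivity)
            _ = c * y ^ n / n.factorial := by ring
        linarith [h2.trans (h3.trans_eq h4)]
      have hv : |ext a y - ext b y| ≤ c * y ^ n / n.factorial := hab y hyI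
      have h6 : g a y - g b y = G y *
          (FF y (A + ∫ s in (0:ℝ)..y, ext a s) (ext a y)
            - FF y (A + ∫ s in (0:ℝ)..y, ext b s) (ext b y)) := by
        simp only [g]; ring
      rw [h6, abs_mul]
      have h7 : |FF y (A + ∫ s in (0:ℝ)..y, ext a s) (ext a y)
            - FF y (A + ∫ s in (0:ℝ)..y, ext b s) (ext b y)|
          ≤ k * (2 * c * y ^ n / n.factorial) := by
        have h := mul_le_mul_of_nonneg_left (add_le_add hu hv) hk
        refine le_trans (hL y _ _ _ _) (h.trans_eq (by ring))
      calc |G y| * |_| ≤ Gmax * (k * (2 * c * y ^ n / n.factorial)) := by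
            apply mul_le_mul (hGmax y hyI) h7 (abs_nonneg _) hGmax0
        _ = Gmax * k * (2 * c) * y ^ n / n.factorial := by ring
    -- now the outer integral
    rw [hΦ_apply t a x ⟨hx0, hx1⟩, hΦ_apply t b x ⟨hx0, hx1⟩]
    have h8 : E x * (2 * (∫ y in (0:ℝ)..x, g a y) + t) - E x * (2 * (∫ y in (0:ℝ)..x, g b y) + t)
        = E x * 2 * ∫ y in (0:ℝ)..x, (g a y - g b y) := by
      rw [intervalIntegral.integral_sub ((hg_cont a).intervalIntegrable _ _)
        ((hg_cont b).intervalIntegrable _ _)]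
      ring
    rw [h8, abs_mul]
    have hEx : 0 < E x := lt_of_lt_of_le hEminpos (hEmin x ⟨hx0, hx1⟩)
    have h9 : |∫ y in (0:ℝ)..x, (g a y - g b y)|
        ≤ ∫ y in (0:ℝ)..x, Gmax * k * (2 * c) * y ^ n / n.factorial := by
      refine le_trans (intervalIntegral.abs_integral_le_integral_abs hx0) ?_
      apply intervalIntegral.integral_mono_on hx0
      · exact (((hg_cont a).sub (hg_cont b)).abs).intervalIntegrable _ _
      · exact Continuous.intervalIntegrable (by fun_prop) _ _
      · exact hgbound
    have h10 : (∫ y in (0:ℝ)..x, Gmax * k * (2 * c) * y ^ n / n.factorial)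
        = (Gmax * k * (2 * c) / n.factorial) * (x ^ (n + 1) / (n + 1)) := by
      have hfe : ∀ y : ℝ, Gmax * k * (2 * c) * y ^ n / n.factorial
          = (Gmax * k * (2 * c) / n.factorial) * y ^ n := by intro y; ring
      simp_rw [hfe]
      rw [intervalIntegral.integral_const_mul, integral_pow]
      push_cast; ring
    have hfac : ((n+1).factorial : ℝ) = (n + 1) * n.factorial := by
      rw [Nat.factorial_succ]; push_cast; ring
    have habs : |E x * 2| = E x * 2 := abs_of_pos (by linarith)
    rw [habs]
    calc E x * 2 * |∫ y in (0:ℝ)..x, (g a y - g b y)|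
        ≤ Emax * 2 * ((Gmax * k * (2 * c) / n.factorial) * (x ^ (n + 1) / (n + 1))) := by
          apply mul_le_mul (by nlinarith [hEmax x ⟨hx0, hx1⟩]) (h9.trans_eq h10)
            (abs_nonneg _) (by positivity)
      _ = κ * c * x ^ (n+1) / ((n + 1) * n.factorial) := by field_simp; ring
      _ = κ * c * x ^ (n+1) / (n+1).factorial := by rw [hfac]
  -- iterated estimate
  have iter : ∀ (t : ℝ) (n : ℕ) (a b : C(↥I, ℝ)), ∀ y ∈ I,
      |ext ((Φ t)^[n] a) y - ext ((Φ t)^[n] b) y|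
        ≤ κ ^ n * dist a b * y ^ n / n.factorial := by
    intro t n
    induction n with
    | zero =>
      intro a b y hy
      simpa using hext_dist a b y
    | succ n ih =>
      intro a b y hy
      rw [Function.iterate_succ_apply', Function.iterate_succ_apply']
      have := step t ((Φ t)^[n] a) ((Φ t)^[n] b) (κ ^ n * dist a b)
        (by positivity) n (ih a b) y hy
      calc |ext (Φ t ((Φ t)^[n] a)) y - ext (Φ t ((Φ t)^[n] b)) y|
          ≤ κ * (κ ^ n * dist a b) * y ^ (n+1) / (n+1).factorial := this
        _ = κ ^ (n+1) * dist a b * y ^ (n+1) / (n+1).factorial := by ring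
  -- one-step Lipschitz bound
  have lip1 : ∀ (t : ℝ) (a b : C(↥I, ℝ)), dist (Φ t a) (Φ t b) ≤ κ * dist a b := by
    intro t a b
    apply (ContinuousMap.dist_le (by positivity)).2
    intro x
    have h1 := step t a b (dist a b) dist_nonneg 0
      (fun y hy => by simpa using hext_dist a b y) x x.2
    rw [hext_eq _ _ x.2, hext_eq _ _ x.2] at h1
    have hx1 : (x:ℝ) ^ (0+1) ≤ 1 := by
      simpa using pow_le_one₀ x.2.1 x.2.2 (n := 1)
    rw [Real.dist_eq]
    calc |Φ t a x - Φ t b x| ≤ κ * dist a b * (x:ℝ) ^ (0+1) / (0+1).factorial := h1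
      _ ≤ κ * dist a b := by
        rw [show ((0+1 : ℕ).factorial : ℝ) = 1 by norm_num, div_one]
        have h2 := mul_le_mul_of_nonneg_left hx1 (mul_nonneg hκ0 (dist_nonneg (x := a) (y := b)))
        linarith
  -- dependence on the parameter t
  have tdep : ∀ (t s : ℝ) (a b : C(↥I, ℝ)),
      dist (Φ t a) (Φ s b) ≤ κ * dist a b + Emax * |t - s| := by
    intro t s a b
    apply (ContinuousMap.dist_le (by positivity)).2
    intro x
    have h1 : Φ t a x - Φ s b x = (Φ t a x - Φ t b x) + E x * (t - s) := by
      show E x * (2 * (∫ y in (0:ℝ)..(x:ℝ), g a y) + t)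
          - E x * (2 * (∫ y in (0:ℝ)..(x:ℝ), g b y) + s)
        = (E x * (2 * (∫ y in (0:ℝ)..(x:ℝ), g a y) + t)
          - E x * (2 * (∫ y in (0:ℝ)..(x:ℝ), g b y) + t)) + E x * (t - s)
      ring
    rw [Real.dist_eq, h1]
    have hEx : 0 < E x := lt_of_lt_of_le hEminpos (hEmin x x.2)
    have h2 : |Φ t a x - Φ t b x| ≤ κ * dist a b := by
      rw [← Real.dist_eq]
      exact le_trans (ContinuousMap.dist_apply_le_dist x) (lip1 t a b)
    have h3 : |E x * (t - s)| ≤ Emax * |t - s| := by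
      rw [abs_mul, abs_of_pos hEx]
      exact mul_le_mul_of_nonneg_right (hEmax x x.2) (abs_nonneg _)
    exact le_trans (abs_add_le _ _) (add_le_add h2 h3)
  have tdepn : ∀ (t s : ℝ) (n : ℕ) (a : C(↥I, ℝ)),
      dist ((Φ t)^[n] a) ((Φ s)^[n] a)
        ≤ (∑ i ∈ Finset.range n, κ ^ i) * (Emax * |t - s|) := by
    intro t s n a
    induction n with
    | zero => simp
    | succ n ih =>
      rw [Function.iterate_succ_apply', Function.iterate_succ_apply']
      calc dist (Φ t ((Φ t)^[n] a)) (Φ s ((Φ s)^[n] a))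
          ≤ κ * dist ((Φ t)^[n] a) ((Φ s)^[n] a) + Emax * |t - s| := tdep t s _ _
        _ ≤ κ * ((∑ i ∈ Finset.range n, κ ^ i) * (Emax * |t - s|)) + Emax * |t - s| := by
            have := mul_le_mul_of_nonneg_left ih hκ0
            linarith
        _ = (∑ i ∈ Finset.range (n+1), κ ^ i) * (Emax * |t - s|) := by
            rw [geom_sum_succ]; ring
  -- choose n making the iterate a contraction
  obtain ⟨n, hn⟩ : ∃ n : ℕ, κ ^ n / n.factorial < 1 := by
    have h := FloorSemiring.tendsto_pow_div_factorial_atTop (K := ℝ) κ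
    have h2 := h.eventually (eventually_lt_nhds (by norm_num : (0:ℝ) < 1))
    obtain ⟨n, hn⟩ := h2.exists
    exact ⟨n, hn⟩
  set K : ℝ := κ ^ n / n.factorial with hKdef
  have hK0 : 0 ≤ K := by positivity
  have hK1 : K < 1 := hn
  have contr : ∀ t : ℝ, ContractingWith K.toNNReal ((Φ t)^[n]) := by
    intro t
    constructor
    · rw [← NNReal.coe_lt_coe, Real.coe_toNNReal _ hK0]; exact hK1
    · apply LipschitzWith.of_dist_le_mul
      intro a b
      rw [Real.coe_toNNReal _ hK0]
      apply (ContinuousMap.dist_le (by positivity)).2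
      intro x
      have h1 := iter t n a b x x.2
      rw [hext_eq _ _ x.2, hext_eq _ _ x.2] at h1
      rw [Real.dist_eq]
      have hx1 : (x:ℝ) ^ n ≤ 1 := pow_le_one₀ x.2.1 x.2.2
      calc |((Φ t)^[n] a) x - ((Φ t)^[n] b) x|
          ≤ κ ^ n * dist a b * (x:ℝ) ^ n / n.factorial := h1
        _ ≤ κ ^ n * dist a b * 1 / n.factorial := by
            apply div_le_div_of_nonneg_right ?_ (by positivity) |>.trans_eq rfl
            exact mul_le_mul_of_nonneg_left hx1 (by positivity)
        _ = K * dist a b := by rw [hKdef]; ring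
  -- the fixed point, for each t
  let p : ℝ → C(↥I, ℝ) := fun t => ContractingWith.fixedPoint ((Φ t)^[n]) (contr t)
  have hpfixn : ∀ t, ((Φ t)^[n]) (p t) = p t := fun t =>
    ContractingWith.fixedPoint_isFixedPt (contr t)
  have hpfix : ∀ t, Φ t (p t) = p t := by
    intro t
    have h2 : Function.IsFixedPt ((Φ t)^[n]) (Φ t (p t)) := by
      show ((Φ t)^[n]) (Φ t (p t)) = Φ t (p t)
      rw [← Function.iterate_succ_apply, Function.iterate_succ_apply', hpfixn t]
    have h3 := (contr t).fixedPoint_unique h2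
    exact h3
  -- Lipschitz dependence of the fixed point on t
  set Cn : ℝ := (∑ i ∈ Finset.range n, κ ^ i) * Emax with hCndef
  have hCn0 : 0 ≤ Cn := by
    apply mul_nonneg (Finset.sum_nonneg fun i _ => pow_nonneg hκ0 i) (le_of_lt hEmaxpos)
  set L : ℝ := Cn / (1 - K) with hLdef
  have hL0 : 0 ≤ L := div_nonneg hCn0 (by linarith)
  have hplip : ∀ t s : ℝ, dist (p t) (p s) ≤ L * |t - s| := by
    intro t s
    have h1 : dist (p t) (p s) ≤ K * dist (p t) (p s) + Cn * |t - s| := by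
      calc dist (p t) (p s) = dist (((Φ t)^[n]) (p t)) (((Φ s)^[n]) (p s)) := by
            rw [hpfixn t, hpfixn s]
        _ ≤ dist (((Φ t)^[n]) (p t)) (((Φ t)^[n]) (p s))
            + dist (((Φ t)^[n]) (p s)) (((Φ s)^[n]) (p s)) := dist_triangle _ _ _
        _ ≤ K * dist (p t) (p s) + Cn * |t - s| := by
            apply add_le_add
            · have := (contr t).toLipschitzWith.dist_le_mul (p t) (p s)
              rwa [Real.coe_toNNReal _ hK0] at this
            · have := tdepn t s n (p s)
              calc dist (((Φ t)^[n]) (p s)) (((Φ s)^[n]) (p s))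
                  ≤ (∑ i ∈ Finset.range n, κ ^ i) * (Emax * |t - s|) := this
                _ = Cn * |t - s| := by rw [hCndef]; ring
    have h2 : (1 - K) * dist (p t) (p s) ≤ Cn * |t - s| := by linarith
    rw [hLdef, div_mul_eq_mul_div, le_div_iff₀ (by linarith : (0:ℝ) < 1 - K)]
    linarith [h2]
  -- the fixed point equation
  have hpeq : ∀ (t : ℝ) (x : ℝ) (hx : x ∈ I),
      ext (p t) x = E x * (2 * (∫ y in (0:ℝ)..x, g (p t) y) + t) := by
    intro t x hx
    conv_lhs => rw [← hpfix t]
    exact hΦ_apply t (p t) x hx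
  -- uniform bound on the nonlinear term
  set R₀ : ℝ := 2 * Gmax * M with hR₀def
  have hR₀0 : 0 ≤ R₀ := by positivity
  have hgb : ∀ (d : C(↥I, ℝ)) (y : ℝ), |g d y| ≤ Gmax * M ∨ True := fun _ _ => Or.inr trivial
  have hboundg : ∀ (d : C(↥I, ℝ)), ∀ y ∈ I, |g d y| ≤ Gmax * M := by
    intro d y hy
    show |G y * FF y _ _| ≤ Gmax * M
    rw [abs_mul]
    exact mul_le_mul (hGmax y hy) (hM _ _ _) (abs_nonneg _) hGmax0
  have hbound : ∀ (t : ℝ), ∀ x ∈ I, |2 * ∫ y in (0:ℝ)..x, g (p t) y| ≤ R₀ := by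
    intro t x hx
    rw [abs_mul]
    have h1 : |∫ y in (0:ℝ)..x, g (p t) y| ≤ ∫ y in (0:ℝ)..x, Gmax * M := by
      refine le_trans (intervalIntegral.abs_integral_le_integral_abs hx.1) ?_
      apply intervalIntegral.integral_mono_on hx.1
      · exact ((hg_cont _).abs).intervalIntegrable _ _
      · exact intervalIntegrable_const
      · intro y hy; exact hboundg _ y ⟨hy.1, hy.2.trans hx.2⟩
    have h2 : (∫ y in (0:ℝ)..x, Gmax * M) = x * (Gmax * M) := by
      simp [intervalIntegral.integral_const, smul_eq_mul]; ring
    have h3 : x * (Gmax * M) ≤ Gmax * M := by nlinarith [hx.1, hx.2, mul_nonneg hGmax0 hM0]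
    have h4 : |∫ y in (0:ℝ)..x, g (p t) y| ≤ Gmax * M := h1.trans (h2 ▸ h3)
    rw [show |(2:ℝ)| = 2 by norm_num, hR₀def]
    linarith
  -- the shooting map
  let f : ℝ → ℝ := fun t => A + ∫ s in (0:ℝ)..1, ext (p t) s
  have hflow : ∀ t : ℝ, R₀ ≤ t → A + Emin * (t - R₀) ≤ f t := by
    intro t ht
    have hpt : ∀ x ∈ I, Emin * (t - R₀) ≤ ext (p t) x := by
      intro x hx
      rw [hpeq t x hx]
      have hEx : Emin ≤ E x := hEmin x hx
      have hEx0 : (0:ℝ) < E x := lt_of_lt_of_le hEminpos hEx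
      have h4 := (abs_le.1 (hbound t x hx)).1
      calc Emin * (t - R₀) ≤ E x * (t - R₀) :=
            mul_le_mul_of_nonneg_right hEx (by linarith)
        _ ≤ E x * (2 * (∫ y in (0:ℝ)..x, g (p t) y) + t) :=
            mul_le_mul_of_nonneg_left (by linarith) hEx0.le
    have h5 : (∫ s in (0:ℝ)..1, Emin * (t - R₀)) ≤ ∫ s in (0:ℝ)..1, ext (p t) s := by
      apply intervalIntegral.integral_mono_on zero_le_one intervalIntegrable_const
        ((hext_cont _).intervalIntegrable _ _)
      intro s hs; exact hpt s hs
    have h6 : (∫ s in (0:ℝ)..1, Emin * (t - R₀)) = Emin * (t - R₀) := by simp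
    show A + Emin * (t - R₀) ≤ A + ∫ s in (0:ℝ)..1, ext (p t) s
    linarith [h6 ▸ h5]
  have hfhigh : ∀ t : ℝ, t ≤ -R₀ → f t ≤ A + Emin * (t + R₀) := by
    intro t ht
    have hpt : ∀ x ∈ I, ext (p t) x ≤ Emin * (t + R₀) := by
      intro x hx
      rw [hpeq t x hx]
      have hEx : Emin ≤ E x := hEmin x hx
      have hEx0 : (0:ℝ) < E x := lt_of_lt_of_le hEminpos hEx
      have h4 := (abs_le.1 (hbound t x hx)).2
      calc E x * (2 * (∫ y in (0:ℝ)..x, g (p t) y) + t) ≤ E x * (t + R₀) :=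
            mul_le_mul_of_nonneg_left (by linarith) hEx0.le
        _ ≤ Emin * (t + R₀) := mul_le_mul_of_nonpos_right hEx (by linarith)
    have h5 : (∫ s in (0:ℝ)..1, ext (p t) s) ≤ ∫ s in (0:ℝ)..1, Emin * (t + R₀) := by
      apply intervalIntegral.integral_mono_on zero_le_one
        ((hext_cont _).intervalIntegrable _ _) intervalIntegrable_const
      intro s hs; exact hpt s hs
    have h6 : (∫ s in (0:ℝ)..1, Emin * (t + R₀)) = Emin * (t + R₀) := by simp
    show A + (∫ s in (0:ℝ)..1, ext (p t) s) ≤ A + Emin * (t + R₀)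
    linarith [h6 ▸ h5]
  -- continuity of the shooting map
  have hfdiff : ∀ t s : ℝ, |f t - f s| ≤ L * |t - s| := by
    intro t s
    have h1 : f t - f s = ∫ y in (0:ℝ)..1, (ext (p t) y - ext (p s) y) := by
      show (A + ∫ y in (0:ℝ)..1, ext (p t) y) - (A + ∫ y in (0:ℝ)..1, ext (p s) y) = _
      rw [intervalIntegral.integral_sub ((hext_cont _).intervalIntegrable _ _)
        ((hext_cont _).intervalIntegrable _ _)]
      ring
    rw [h1]
    have h2 : |∫ y in (0:ℝ)..1, (ext (p t) y - ext (p s) y)|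
        ≤ ∫ y in (0:ℝ)..1, dist (p t) (p s) := by
      refine le_trans (intervalIntegral.abs_integral_le_integral_abs zero_le_one) ?_
      apply intervalIntegral.integral_mono_on zero_le_one
        ((((hext_cont _).sub (hext_cont _)).abs).intervalIntegrable _ _)
        intervalIntegrable_const
      intro y _; exact hext_dist _ _ y
    have h3 : (∫ y in (0:ℝ)..1, dist (p t) (p s)) = dist (p t) (p s) := by simp
    calc |∫ y in (0:ℝ)..1, (ext (p t) y - ext (p s) y)| ≤ dist (p t) (p s) := h3 ▸ h2
      _ ≤ L * |t - s| := hplip t s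
  have hfcont : Continuous f := by
    have : LipschitzWith L.toNNReal f := by
      apply LipschitzWith.of_dist_le_mul
      intro t s
      rw [Real.coe_toNNReal _ hL0, Real.dist_eq, Real.dist_eq]
      exact hfdiff t s
    exact this.continuous
  -- the shooting argument
  set q : ℝ := (B - A) / Emin with hqdef
  set tp : ℝ := R₀ + max 0 q with htpdef
  set tm : ℝ := -R₀ + min 0 q with htmdef
  have htm_le_tp : tm ≤ tp := by
    have := le_max_left (0:ℝ) q
    have := min_le_left (0:ℝ) q
    simp only [htpdef, htmdef]; linarith
  have hEq : Emin * q = B - A := by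
    rw [hqdef]; field_simp
  have hfp : B ≤ f tp := by
    have h1 := hflow tp (by simp only [htpdef]; linarith [le_max_left (0:ℝ) q])
    have h2 : Emin * q ≤ Emin * max 0 q :=
      mul_le_mul_of_nonneg_left (le_max_right 0 q) hEminpos.le
    have h3 : tp - R₀ = max 0 q := by simp only [htpdef]; ring
    rw [h3] at h1
    linarith [hEq ▸ h2]
  have hfm : f tm ≤ B := by
    have h1 := hfhigh tm (by simp only [htmdef]; linarith [min_le_left (0:ℝ) q])
    have h2 : Emin * min 0 q ≤ Emin * q :=
      mul_le_mul_of_nonneg_left (min_le_right 0 q) hEminpos.le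
    have h3 : tm + R₀ = min 0 q := by simp only [htmdef]; ring
    rw [h3] at h1
    linarith [hEq ▸ h2]
  obtain ⟨tstar, _, htseq⟩ := intermediate_value_Icc htm_le_tp hfcont.continuousOn
    (⟨hfm, hfp⟩ : B ∈ Icc (f tm) (f tp))
  -- conclusion
  refine ⟨tstar, ext (p tstar), hext_cont _, htseq, ?_⟩
  intro x hx
  exact hpeq tstar x hx

/-- if `F : [0,1] × ℝ² → ℝ` is bounded, continuous and globally Lipschitz
in `(y,z)` uniformly in `x ∈ [0,1]`, then for every `A, B ∈ ℝ` there exists a solution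
of the boundary value problem `Lu = F(x,u,u')`, `u(0) = A`, `u(1) = B`. -/
theorem bvp_exists_solution_bounded_lipschitz
    (σ Sig : ℝ → ℝ) (hσ : Continuous σ) (hSig : Continuous Sig)
    (hσpos : ∀ x, 0 < σ x)
    (F : ℝ → ℝ → ℝ → ℝ)
    (hF : ContinuousOn (fun p : ℝ × ℝ × ℝ => F p.1 p.2.1 p.2.2)
      {p : ℝ × ℝ × ℝ | p.1 ∈ Icc (0 : ℝ) 1})
    (hbdd : ∃ C : ℝ, ∀ x ∈ Icc (0 : ℝ) 1, ∀ y z : ℝ, |F x y z| ≤ C)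
    (hLip : ∃ k : ℝ, ∀ x ∈ Icc (0 : ℝ) 1, ∀ y z ytilde ztilde : ℝ,
      |F x y z - F x ytilde ztilde| ≤ k * (|y - ytilde| + |z - ztilde|))
    (A B : ℝ) :
    ∃ u : ℝ → ℝ, IsBVPSolutionF σ Sig 0 1 A B F u := by
  obtain ⟨M, hM⟩ := hbdd
  obtain ⟨k, hk⟩ := hLip
  -- the retraction of ℝ onto [0,1]
  set π : ℝ → ℝ := fun y => (Set.projIcc (0:ℝ) 1 zero_le_one y : ℝ) with hπdef
  have hπmem : ∀ y, π y ∈ Icc (0:ℝ) 1 := fun y => (Set.projIcc (0:ℝ) 1 zero_le_one y).2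
  have hπcont : Continuous π := continuous_subtype_val.comp continuous_projIcc
  have hπeq : ∀ y ∈ Icc (0:ℝ) 1, π y = y := by
    intro y hy
    simp only [hπdef, Set.projIcc_of_mem zero_le_one hy]
  -- the modified nonlinearity
  set FF : ℝ → ℝ → ℝ → ℝ := fun y u v => F (π y) u v with hFFdef
  have hFFc : Continuous fun p : ℝ × ℝ × ℝ => FF p.1 p.2.1 p.2.2 := by
    apply hF.comp_continuous
      (((hπcont.comp continuous_fst)).prodMk continuous_snd)
    intro p
    exact hπmem p.1
  set M' : ℝ := max M 0 with hM'def
  have hM' : ∀ x y z, |FF x y z| ≤ M' := fun x y z =>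
    (hM _ (hπmem x) y z).trans (le_max_left _ _)
  set k' : ℝ := max k 0 with hk'def
  have hk'0 : (0:ℝ) ≤ k' := le_max_right _ _
  have hL' : ∀ x y z y' z', |FF x y z - FF x y' z'| ≤ k' * (|y - y'| + |z - z'|) := by
    intro x y z y' z'
    refine (hk _ (hπmem x) y z y' z').trans ?_
    exact mul_le_mul_of_nonneg_right (le_max_left _ _) (by positivity)
  -- the coefficient functions
  set E : ℝ → ℝ := fun x => Real.exp (-(Sig x)) with hEdef
  set G : ℝ → ℝ := fun y => Real.exp (Sig y) / (σ y) ^ 2 with hGdef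
  have hE : Continuous E := Real.continuous_exp.comp hSig.neg
  have hG : Continuous G :=
    (Real.continuous_exp.comp hSig).div (hσ.pow 2) (fun y => pow_ne_zero 2 (hσpos y).ne')
  -- bounds on compact [0,1]
  have hne : (Icc (0:ℝ) 1).Nonempty := Set.nonempty_Icc.2 zero_le_one
  obtain ⟨xm, _, hxm⟩ := isCompact_Icc.exists_isMinOn (f := E) hne hE.continuousOn
  obtain ⟨xM, _, hxM⟩ := isCompact_Icc.exists_isMaxOn (f := E) hne hE.continuousOn
  obtain ⟨xG, _, hxG⟩ := isCompact_Icc.exists_isMaxOn (f := fun y => |G y|)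
    hne hG.abs.continuousOn
  have hEminpos : 0 < E xm := Real.exp_pos _
  obtain ⟨t, d, hdc, hB, heq⟩ := bvp_key E G hE hG (E xm) (E xM) (|G xG|) hEminpos
    (fun x hx => hxm hx) (fun x hx => hxM hx) (fun x hx => hxG hx)
    FF hFFc M' hM' k' hk'0 hL' A B
  refine ⟨fun x => A + ∫ s in (0:ℝ)..x, d s, by simp, hB, d, t, hdc.continuousOn, ?_, ?_⟩
  · intro x hx
    have h1 : HasDerivAt (fun x : ℝ => ∫ s in (0:ℝ)..x, d s) (d x) x :=
      intervalIntegral.integral_hasDerivAt_right (hdc.intervalIntegrable _ _)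
        (hdc.stronglyMeasurable.stronglyMeasurableAtFilter) hdc.continuousAt
    exact ((h1.const_add A).hasDerivWithinAt)
  · intro x hx
    rw [heq x hx]
    have hcongr : (∫ y in (0:ℝ)..x, G y * FF y (A + ∫ s in (0:ℝ)..y, d s) (d y))
        = ∫ y in (0:ℝ)..x, Real.exp (Sig y) *
            F y (A + ∫ s in (0:ℝ)..y, d s) (d y) / (σ y) ^ 2 := by
      apply intervalIntegral.integral_congr
      intro y hy
      rw [Set.uIcc_of_le hx.1] at hy
      have hyI : y ∈ Icc (0:ℝ) 1 := ⟨hy.1, hy.2.trans hx.2⟩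
      show G y * FF y _ _ = _
      rw [hFFdef]
      simp only
      rw [hπeq y hyI, hGdef]
      ring
    rw [hcongr]
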